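/- For every x in (0,1), if k = floor(1/x), then applying the Farey map F k times to x equals the Gauss map applied to x, where F(x) = x/(1-x) for x in [0,1/2) and F(x) = (1-x)/x for x in [1/2,1), and G(x) = 1/x - floor(1/x). -/

import Mathlib

/-- The Farey map on [0,1). -/
noncomputable def fareyMap (x : ℝ) : ℝ := if x < 1/2 then x / (1 - x) else (1 - x) / x

/-- The Gauss map on [0,1). -/
noncomputable def gaussMap (x : ℝ) : ℝ := if x = 0 then 0 else 1/x - ⌊1/x⌋

theorem farey_iterate_eq_gauss (x : ℝ) (hx : x ∈ Set.Ioo (0:ℝ) 1)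
    (k : ℕ) (hk : (k : ℤ) = ⌊1/x⌋) :
    fareyMap^[k] x = gaussMap x := by
  induction k generalizing x with
  | zero =>
    obtain ⟨hx0, hx1⟩ := hx
    have h1 : (1:ℝ) ≤ 1/x := by
      rw [le_div_iff₀ hx0]; linarith
    have : (1:ℤ) ≤ ⌊1/x⌋ := by exact_mod_cast Int.le_floor.mpr (by exact_mod_cast h1)
    omega
  | succ n ih =>
    obtain ⟨hx0, hx1⟩ := hx
    by_cases hn : n = 0
    · subst hn
      have hfl : ⌊1/x⌋ = 1 := hk.symm
      have h2 : 1/x < 2 := by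
        have := Int.lt_floor_add_one (1/x)
        rw [hfl] at this; push_cast at this; linarith
      have hhalf : 1/2 < x := by
        rw [div_lt_iff₀ hx0] at h2; linarith
      have hnot : ¬ x < 1/2 := by linarith
      rw [Function.iterate_one]
      unfold fareyMap gaussMap
      rw [if_neg hnot, if_neg (ne_of_gt hx0), hfl]
      push_cast
      field_simp
    · have hn1 : 1 ≤ n := Nat.one_le_iff_ne_zero.mpr hn
      have hfl2 : (2:ℤ) ≤ ⌊1/x⌋ := by rw [← hk]; exact_mod_cast Nat.succ_le_succ hn1
      have h2le : (2:ℝ) ≤ 1/x := by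
        have := Int.floor_le (1/x)
        calc (2:ℝ) ≤ (⌊1/x⌋ : ℝ) := by exact_mod_cast hfl2
          _ ≤ 1/x := this
      have hxle : x ≤ 1/2 := by
        rw [le_div_iff₀ hx0] at h2le
        linarith
      by_cases hhalf : x = 1/2
      · subst hhalf
        have hfl : ⌊(1:ℝ)/(1/2)⌋ = 2 := by norm_num
        have hn1' : n = 1 := by
          have := hk; rw [hfl] at this; omega
        subst hn1'
        show fareyMap (fareyMap (fareyMap^[0] (1/2))) = gaussMap (1/2)
        norm_num [fareyMap, gaussMap]
      · have hxlt : x < 1/2 := lt_of_le_of_ne hxle hhalf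
        have h1x : (0:ℝ) < 1 - x := by linarith
        set y := x / (1 - x) with hy
        have hy0 : 0 < y := div_pos hx0 h1x
        have hy1 : y < 1 := by
          rw [div_lt_one h1x]; linarith
        have hinv : 1/y = 1/x - 1 := by
          rw [hy]; field_simp
        have hfly : ⌊1/y⌋ = ⌊1/x⌋ - 1 := by
          rw [hinv]
          have : (1:ℝ) = ((1:ℤ):ℝ) := by norm_num
          rw [this, Int.floor_sub_intCast]
        have hkn : (n : ℤ) = ⌊1/y⌋ := by rw [hfly, ← hk]; push_cast; ring
        have hstep : fareyMap^[n+1] x = fareyMap^[n] y := by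
          rw [Function.iterate_succ_apply]
          congr 1
          unfold fareyMap
          rw [if_pos hxlt]
        rw [hstep, ih y ⟨hy0, hy1⟩ hkn]
        unfold gaussMap
        rw [if_neg (ne_of_gt hy0), if_neg (ne_of_gt hx0), hfly, hinv]
        push_cast
        ring
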